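/- The dcpo of countable-support sub-probability distributions on a countable set S (ordered pointwise) is a continuous dcpo with a countable basis: every distribution ν is the directed supremum of the set of finitely-supported distributions μ with rational weights satisfying μ(x) < ν(x) on the support of μ, and each such μ is way below ν. -/
import Mathlib


open scoped ENNReal

/-- A discrete sub-probability distribution: total mass at most 1. -/
def SubDist {S : Type*} (μ : S → ℝ≥0∞) : Prop := ∑' x, μ x ≤ 1

/-- Probabilistic lifting of a relation via a matching (coupling). -/
def Lift {S : Type*} (R : S → S → Prop) (μ ν : S → ℝ≥0∞) : Prop :=
  ∃ m : S → S → ℝ≥0∞,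
    (∀ x y, m x y ≠ 0 → R x y) ∧
    (∀ x, (∑' y, m x y) = μ x) ∧
    (∀ y, (∑' x, m x y) ≤ ν y)

/-- Continuity of the dcpo of sub-distributions: the finitely-supported
rational-weighted approximants strictly below `ν` form a directed set with
pointwise supremum `ν`, each member being way below `ν`. -/
theorem stmt5 {S : Type*} [Countable S] (ν : S → ℝ≥0∞) (hν : SubDist ν) :
    DirectedOn (fun a b => ∀ x, a x ≤ b x)
      {μ : S → ℝ≥0∞ | (Function.support μ).Finite ∧
        (∀ x, ∃ q : ℚ, 0 ≤ q ∧ μ x = ENNReal.ofReal q) ∧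
        ∀ x, μ x ≠ 0 → μ x < ν x} ∧
    (∀ x, ν x = ⨆ μ ∈ {μ : S → ℝ≥0∞ | (Function.support μ).Finite ∧
        (∀ x, ∃ q : ℚ, 0 ≤ q ∧ μ x = ENNReal.ofReal q) ∧
        ∀ x, μ x ≠ 0 → μ x < ν x}, μ x) ∧
    (∀ μ ∈ {μ : S → ℝ≥0∞ | (Function.support μ).Finite ∧
        (∀ x, ∃ q : ℚ, 0 ≤ q ∧ μ x = ENNReal.ofReal q) ∧
        ∀ x, μ x ≠ 0 → μ x < ν x},
      ∀ D : Set (S → ℝ≥0∞), D.Nonempty →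
        DirectedOn (fun a b => ∀ x, a x ≤ b x) D →
        (∀ ρ ∈ D, SubDist ρ) →
        (∀ x, ν x ≤ ⨆ ρ ∈ D, ρ x) →
        ∃ ρ ∈ D, ∀ x, μ x ≤ ρ x) := by
  classical
  set A := {μ : S → ℝ≥0∞ | (Function.support μ).Finite ∧
        (∀ x, ∃ q : ℚ, 0 ≤ q ∧ μ x = ENNReal.ofReal q) ∧
        ∀ x, μ x ≠ 0 → μ x < ν x} with hA
  refine ⟨?_, ?_, ?_⟩
  · -- directedness
    rintro a ⟨ha1, ha2, ha3⟩ b ⟨hb1, hb2, hb3⟩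
    refine ⟨fun x => max (a x) (b x), ⟨?_, ?_, ?_⟩, fun x => le_max_left _ _,
      fun x => le_max_right _ _⟩
    · apply (ha1.union hb1).subset
      intro x hx
      have hx' : a x ⊔ b x ≠ 0 := hx
      by_contra h
      simp only [Set.mem_union, Function.mem_support, ne_eq, not_or, not_not] at h
      exact hx' (by simp [h.1, h.2])
    · intro x
      obtain ⟨q, hq0, hq⟩ := ha2 x
      obtain ⟨r, hr0, hr⟩ := hb2 x
      refine ⟨max q r, le_max_of_le_left hq0, ?_⟩
      show a x ⊔ b x = _
      rw [hq, hr]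
      rcases le_total q r with h | h
      · rw [max_eq_right h, max_eq_right (ENNReal.ofReal_le_ofReal (by exact_mod_cast h))]
      · rw [max_eq_left h, max_eq_left (ENNReal.ofReal_le_ofReal (by exact_mod_cast h))]
    · intro x hx
      replace hx : a x ⊔ b x ≠ 0 := hx
      show a x ⊔ b x < ν x
      rcases max_cases (a x) (b x) with ⟨he, _⟩ | ⟨he, _⟩ <;> rw [he] at hx ⊢
      · exact ha3 x hx
      · exact hb3 x hx
  · -- supremum
    intro x
    apply le_antisymm
    · refine le_of_forall_lt fun c hc => ?_
      obtain ⟨q, hq0, hcq, hqν⟩ := ENNReal.lt_iff_exists_rat_btwn.mp hc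
      have hmem : (fun y => if y = x then (Real.toNNReal q : ℝ≥0∞) else 0) ∈ A := by
        refine ⟨(Set.finite_singleton x).subset ?_, fun y => ?_, fun y hy => ?_⟩
        · intro y hy
          simp only [Function.mem_support, ne_eq] at hy
          by_contra h
          simp only [Set.mem_singleton_iff] at h
          exact hy (if_neg h)
        · by_cases h : y = x
          · exact ⟨q, hq0, by simp only [if_pos h]; rfl⟩
          · exact ⟨0, le_refl _, by simp [h]⟩
        · by_cases h : y = x
          · subst h; simpa using hqν
          · simp [h] at hy
      calc c < (Real.toNNReal q : ℝ≥0∞) := hcq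
        _ ≤ ⨆ μ ∈ A, μ x := by
            refine le_trans ?_ (le_iSup₂ (f := fun μ _ => μ x) _ hmem)
            simp
    · refine iSup₂_le fun μ hμ => ?_
      by_cases h : μ x = 0
      · simp [h]
      · exact (hμ.2.2 x h).le
  · -- way below
    rintro μ ⟨hfin, _, hlt⟩ D hDne hDdir hDsub hDsup
    -- for each x in support, find ρ ∈ D with μ x ≤ ρ x
    have key : ∀ x ∈ hfin.toFinset, ∃ ρ ∈ D, μ x ≤ ρ x := by
      intro x hx
      have hx' : μ x ≠ 0 := by simpa [Function.mem_support] using hfin.mem_toFinset.mp hx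
      have : μ x < ⨆ ρ ∈ D, ρ x := lt_of_lt_of_le (hlt x hx') (hDsup x)
      obtain ⟨ρ, hρD, hρ⟩ : ∃ ρ ∈ D, μ x < ρ x := by
        by_contra h
        push_neg at h
        exact absurd (iSup₂_le fun ρ hρ => h ρ hρ) (not_le.mpr this)
      exact ⟨ρ, hρD, hρ.le⟩
    -- get a common upper bound by induction on the finite support
    have main : ∀ t : Finset S, (↑t ⊆ Function.support μ) →
        ∃ ρ ∈ D, ∀ x ∈ t, μ x ≤ ρ x := by
      intro t
      induction t using Finset.induction_on with
      | empty =>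
        intro _
        obtain ⟨ρ, hρ⟩ := hDne
        exact ⟨ρ, hρ, fun x hx => absurd hx (Finset.notMem_empty x)⟩
      | @insert x s hxs ih =>
        intro hsub
        obtain ⟨ρ₁, hρ₁D, hρ₁⟩ := ih fun y hy => hsub (Finset.mem_insert_of_mem hy)
        have hxmem : x ∈ hfin.toFinset := hfin.mem_toFinset.mpr
          (hsub (Finset.mem_insert_self x s))
        obtain ⟨ρ₂, hρ₂D, hρ₂⟩ := key x hxmem
        obtain ⟨ρ, hρD, h1, h2⟩ := hDdir ρ₁ hρ₁D ρ₂ hρ₂D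
        refine ⟨ρ, hρD, fun y hy => ?_⟩
        rcases Finset.mem_insert.mp hy with rfl | hy
        · exact hρ₂.trans (h2 y)
        · exact (hρ₁ y hy).trans (h1 y)
    obtain ⟨ρ, hρD, hρ⟩ := main hfin.toFinset (by simp)
    refine ⟨ρ, hρD, fun x => ?_⟩
    by_cases h : μ x = 0
    · simp [h]
    · exact hρ x (hfin.mem_toFinset.mpr h)
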